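/- For every λ ∈ ℝ, the characteristic function identity ∫_ℝ e^{iλx} f(x) dx = exp(iσλ − κ|λ|) holds; equivalently, the Fourier transform of f is λ ↦ e^{−|λ|ω(λ)} with ω(λ) = e^{−iπ·sign(λ)·β/2} = κ − i·sign(λ)·σ. -/

import Mathlib

open Real MeasureTheory
section StableAux
open Set Filter Topology


lemma my_integrableOn_cexp {a : ℂ} (ha : 0 < a.re) :
    IntegrableOn (fun t : ℝ => Complex.exp (-a * t)) (Ioi 0) := by
  apply Integrable.mono' (g := fun t : ℝ => Real.exp (-a.re * t))
  · exact (exp_neg_integrableOn_Ioi 0 ha).congr_fun (fun x hx => by simp only [neg_mul]) measurableSet_Ioi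
  · exact (Complex.continuous_exp.comp (by continuity)).aestronglyMeasurable
  · filter_upwards with t
    rw [Complex.norm_exp]
    simp [neg_mul]

lemma my_integral_cexp_Ioi {a : ℂ} (ha : 0 < a.re) :
    ∫ t : ℝ in Ioi 0, Complex.exp (-a * t) = 1 / a := by
  have ha0 : a ≠ 0 := fun h => by simp [h] at ha
  have := integral_Ioi_of_hasDerivAt_of_tendsto' (a := 0)
    (f := fun t : ℝ => -Complex.exp (-a * t) / a)
    (f' := fun t : ℝ => Complex.exp (-a * t)) (m := 0) ?_ (my_integrableOn_cexp ha) ?_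
  · rw [this]; simp; ring
  · intro x hx
    have h1 : HasDerivAt (fun t : ℝ => -a * (t : ℂ)) (-a) x := by
      simpa using ((hasDerivAt_id (x : ℂ)).const_mul (-a)).comp_ofReal
    have := (h1.cexp).neg.div_const a
    convert this using 1
    · rfl
    · rfl
    · rw [mul_neg, neg_neg, mul_div_assoc, div_self ha0, mul_one]
  · rw [show (0 : ℂ) = -0 / a by simp]
    apply Tendsto.div_const
    apply Tendsto.neg
    rw [tendsto_zero_iff_norm_tendsto_zero]
    have : ∀ t : ℝ, ‖Complex.exp (-a * t)‖ = Real.exp (-a.re * t) := by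
      intro t; rw [Complex.norm_exp]; simp [neg_mul]
    simp_rw [this]
    exact Real.tendsto_exp_atBot.comp (tendsto_id.const_mul_atTop_of_neg (neg_lt_zero.2 ha) |>.congr (fun x => rfl))

lemma my_integrable_exp_neg_abs : Integrable (fun u : ℝ => Real.exp (-|u|)) := by
  rw [← integrableOn_univ, ← Set.Iic_union_Ioi (a := (0:ℝ))]
  apply IntegrableOn.union
  · apply (integrableOn_exp_Iic 0).congr_fun _ measurableSet_Iic
    intro x hx
    show rexp x = rexp (-|x|)
    rw [abs_of_nonpos (mem_Iic.mp hx), neg_neg]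
  · apply ((exp_neg_integrableOn_Ioi 0 one_pos).congr_fun _ measurableSet_Ioi)
    intro x hx
    show rexp (-1 * x) = rexp (-|x|)
    rw [neg_one_mul, abs_of_pos (mem_Ioi.mp hx)]

lemma my_norm_aux (c : ℝ) (u : ℝ) :
    ‖Complex.exp ((c : ℂ) * u * Complex.I) * (Real.exp (-|u|) : ℂ)‖ = Real.exp (-|u|) := by
  rw [norm_mul, Complex.norm_exp, Complex.norm_real, Real.norm_eq_abs,
    abs_of_pos (Real.exp_pos _)]
  simp

lemma my_integrable_exp_abs_mul (c : ℝ) :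
    Integrable (fun u : ℝ => Complex.exp ((c : ℂ) * u * Complex.I) * (Real.exp (-|u|) : ℂ)) := by
  apply Integrable.mono' (g := fun u : ℝ => Real.exp (-|u|))
  · exact my_integrable_exp_neg_abs
  · apply Continuous.aestronglyMeasurable
    continuity
  · filter_upwards with u
    rw [my_norm_aux]

lemma my_ft_exp_abs (c : ℝ) :
    (∫ u : ℝ, Complex.exp ((c : ℂ) * u * Complex.I) * (Real.exp (-|u|) : ℂ))
      = 2 / (1 + (c : ℂ) ^ 2) := by
  set g : ℝ → ℂ := fun u => Complex.exp ((c : ℂ) * u * Complex.I) * (Real.exp (-|u|) : ℂ) with hg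
  have hint := my_integrable_exp_abs_mul c
  have hsplit : (∫ u : ℝ, g u) = (∫ u in Iic 0, g u) + ∫ u in Ioi 0, g u :=
    (intervalIntegral.integral_Iic_add_Ioi hint.integrableOn hint.integrableOn).symm
  have hIoi : (∫ u in Ioi (0:ℝ), g u) = 1 / (1 - (c:ℂ) * Complex.I) := by
    rw [← my_integral_cexp_Ioi (a := 1 - (c:ℂ) * Complex.I) (by simp)]
    apply setIntegral_congr_fun measurableSet_Ioi
    intro u hu
    rw [hg]
    show Complex.exp ((c : ℂ) * u * Complex.I) * (Real.exp (-|u|) : ℂ)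
      = Complex.exp (-(1 - (c:ℂ) * Complex.I) * u)
    rw [abs_of_pos (mem_Ioi.mp hu), Complex.ofReal_exp, ← Complex.exp_add]
    · congr 1
      push_cast
      ring
  have hIic : (∫ u in Iic (0:ℝ), g u) = 1 / (1 + (c:ℂ) * Complex.I) := by
    rw [show Iic (0:ℝ) = Iic (-0 : ℝ) by norm_num, ← integral_comp_neg_Ioi,
      ← my_integral_cexp_Ioi (a := 1 + (c:ℂ) * Complex.I) (by simp)]
    apply setIntegral_congr_fun measurableSet_Ioi
    intro u hu
    show g (-u) = Complex.exp (-(1 + (c:ℂ) * Complex.I) * u)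
    rw [hg]
    show Complex.exp ((c : ℂ) * (-u : ℝ) * Complex.I) * (Real.exp (-|(-u : ℝ)|) : ℂ)
      = Complex.exp (-(1 + (c:ℂ) * Complex.I) * u)
    rw [abs_neg, abs_of_pos (mem_Ioi.mp hu), Complex.ofReal_exp, ← Complex.exp_add]
    · congr 1
      push_cast
      ring
  rw [hsplit, hIoi, hIic]
  have h1 : (1 : ℂ) + (c:ℂ) * Complex.I ≠ 0 := by
    intro h
    have := congrArg Complex.re h
    simp at this
  have h2 : (1 : ℂ) - (c:ℂ) * Complex.I ≠ 0 := by
    intro h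
    have := congrArg Complex.re h
    simp at this
  have h3 : (1 : ℂ) + (c:ℂ) ^ 2 ≠ 0 := by
    rw [show (1:ℂ) + (c:ℂ) ^ 2 = ((1 + c ^ 2 : ℝ) : ℂ) by push_cast; ring]
    simp only [ne_eq, Complex.ofReal_eq_zero]
    positivity
  field_simp
  ring_nf
  rw [Complex.I_sq]
  ring


open FourierTransform in
lemma my_poisson (t : ℝ) :
    (∫ u : ℝ, Complex.exp ((t:ℂ) * u * Complex.I) * (1 / (1 + (u:ℂ) ^ 2)))
      = (π : ℂ) * (Real.exp (-|t|) : ℂ) := by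
  set g : ℝ → ℂ := fun u => (Real.exp (-|u|) : ℂ) with hgdef
  have hgint : Integrable g := my_integrable_exp_neg_abs.ofReal
  have hF : ∀ w : ℝ, 𝓕 g w = 2 / (1 + ((2 * π * w : ℝ) : ℂ) ^ 2) := by
    intro w
    rw [Real.fourier_real_eq_integral_exp_smul,
      show ((2 * π * w : ℝ) : ℂ) ^ 2 = ((-(2 * π * w) : ℝ) : ℂ) ^ 2 by push_cast; ring,
      ← my_ft_exp_abs (-(2 * π * w))]
    congr 1
    ext v
    rw [smul_eq_mul]
    congr 2
    push_cast
    ring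
  have hFint : Integrable (𝓕 g) := by
    have hre : Integrable (fun w : ℝ => 2 / (1 + (2 * π * w) ^ 2)) := by
      simp_rw [div_eq_mul_inv]
      exact (integrable_inv_one_add_sq.comp_mul_left' (R := 2 * π)
        (by positivity)).const_mul 2
    apply hre.ofReal.congr
    filter_upwards with w
    rw [hF w]
    norm_cast
  have hgcont : Continuous g := by
    apply Complex.continuous_ofReal.comp
    continuity
  have hinv := hgcont.fourierInv_fourier_eq hgint hFint
  have hx := congrFun hinv t
  rw [Real.fourierInv_eq'] at hx
  set h : ℝ → ℂ := fun u => Complex.exp ((t:ℂ) * u * Complex.I) * (2 / (1 + (u:ℂ) ^ 2)) with hhdef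
  have key : (∫ v : ℝ, h (2 * π * v)) = g t := by
    rw [← hx]
    congr 1
    ext v
    rw [smul_eq_mul, hF v, hhdef]
    simp only [RCLike.inner_apply, conj_trivial]
    congr 2
    push_cast
    ring
  have hcv : (∫ v : ℝ, h (2 * π * v)) = |(2 * π)⁻¹| • ∫ u : ℝ, h u :=
    MeasureTheory.Measure.integral_comp_mul_left h (2 * π)
  have h2 : (∫ u : ℝ, h u) = 2 * ∫ u : ℝ, Complex.exp ((t:ℂ) * u * Complex.I) * (1 / (1 + (u:ℂ) ^ 2)) := by
    rw [← integral_const_mul]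
    congr 1
    ext u
    rw [hhdef]
    ring
  rw [hcv, h2] at key
  rw [abs_of_pos (by positivity : (0:ℝ) < (2 * π)⁻¹)] at key
  have : ((2 * π)⁻¹ : ℝ) • (2 * ∫ u : ℝ, Complex.exp ((t:ℂ) * u * Complex.I) * (1 / (1 + (u:ℂ) ^ 2)))
      = (π : ℂ)⁻¹ * ∫ u : ℝ, Complex.exp ((t:ℂ) * u * Complex.I) * (1 / (1 + (u:ℂ) ^ 2)) := by
    have hπ : (π : ℂ) ≠ 0 := by simp [Real.pi_ne_zero]
    rw [Complex.real_smul, ← mul_assoc]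
    congr 1
    push_cast
    field_simp
  rw [this] at key
  have hπ : (π : ℂ) ≠ 0 := by simp [Real.pi_ne_zero]
  field_simp at key ⊢
  simp_rw [mul_right_comm (t:ℂ) Complex.I]
  rw [key, hgdef]


end StableAux


/-- For the α = 1, skewness-β stable density
`f(x) = 1/(πκ(1 + (x−σ)²/κ²))` with `κ = cos(πβ/2)`, `σ = sin(πβ/2)`,
the characteristic function identity
`∫ e^{iλx} f(x) dx = exp(iσλ − κ|λ|)` holds for every `λ ∈ ℝ`. -/
theorem stable_characteristic_function
    (β : ℝ) (hβ : β ∈ Set.Ioo (-1 : ℝ) 1)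
    (κ σ : ℝ) (hκ : κ = Real.cos (π * β / 2)) (hσ : σ = Real.sin (π * β / 2))
    (f : ℝ → ℝ) (hf : ∀ x : ℝ, f x = 1 / (π * κ * (1 + (x - σ) ^ 2 / κ ^ 2))) :
    ∀ l : ℝ,
      (∫ x : ℝ, Complex.exp (Complex.I * (l : ℂ) * (x : ℂ)) * (f x : ℂ)) =
        Complex.exp (Complex.I * (σ : ℂ) * (l : ℂ) - ((κ * |l| : ℝ) : ℂ)) := by
  intro l
  have hκpos : 0 < κ := by
    rw [hκ]
    apply Real.cos_pos_of_mem_Ioo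
    constructor
    · nlinarith [hβ.1, Real.pi_pos]
    · nlinarith [hβ.2, Real.pi_pos]
  have hκ0 : κ ≠ 0 := hκpos.ne'
  set F : ℝ → ℂ := fun x => Complex.exp (Complex.I * (l : ℂ) * (x : ℂ)) * (f x : ℂ) with hFdef
  have step1 : (∫ x : ℝ, F x) = |κ| • ∫ u : ℝ, F (κ * u + σ) := by
    have h1 : (∫ u : ℝ, F (κ * u + σ)) = |κ⁻¹| • ∫ y : ℝ, F (y + σ) :=
      MeasureTheory.Measure.integral_comp_mul_left (fun y : ℝ => F (y + σ)) κ
    have h2 : (∫ y : ℝ, F (y + σ)) = ∫ x : ℝ, F x := integral_add_right_eq_self F σ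
    rw [h1, h2, smul_smul, abs_inv, mul_inv_cancel₀ (abs_ne_zero.mpr hκ0), one_smul]
  have step2 : (∫ u : ℝ, F (κ * u + σ)) =
      Complex.exp (Complex.I * σ * l) * ((π : ℂ) * κ)⁻¹ *
        ∫ u : ℝ, Complex.exp (((l * κ : ℝ) : ℂ) * u * Complex.I) * (1 / (1 + (u : ℂ) ^ 2)) := by
    rw [← integral_const_mul]
    congr 1
    ext u
    rw [hFdef]
    show Complex.exp (Complex.I * l * ((κ * u + σ : ℝ) : ℂ)) * ((f (κ * u + σ) : ℝ) : ℂ) = _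
    rw [hf (κ * u + σ)]
    have hsq : (κ * u + σ - σ) ^ 2 / κ ^ 2 = u ^ 2 := by
      field_simp
      ring
    rw [show κ * u + σ - σ = κ * u by ring] at hsq
    rw [show (1 : ℝ) / (π * κ * (1 + (κ * u + σ - σ) ^ 2 / κ ^ 2)) =
        1 / (π * κ * (1 + u ^ 2)) by rw [show κ * u + σ - σ = κ * u by ring, hsq]]
    rw [show Complex.I * l * ((κ * u + σ : ℝ) : ℂ)
        = Complex.I * σ * l + ((l * κ : ℝ) : ℂ) * u * Complex.I by push_cast; ring,
      Complex.exp_add]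
    have h1u : (1 : ℂ) + (u : ℂ) ^ 2 ≠ 0 := by
      rw [show (1:ℂ) + (u:ℂ) ^ 2 = ((1 + u ^ 2 : ℝ) : ℂ) by push_cast; ring]
      simp only [ne_eq, Complex.ofReal_eq_zero]
      positivity
    have hπ : (π : ℂ) ≠ 0 := by simp [Real.pi_ne_zero]
    have hκc : (κ : ℂ) ≠ 0 := by exact_mod_cast hκ0
    push_cast
    field_simp
  have step3 := my_poisson (l * κ)
  rw [step1, step2, step3]
  have hπ : (π : ℂ) ≠ 0 := by simp [Real.pi_ne_zero]
  have hκc : (κ : ℂ) ≠ 0 := by exact_mod_cast hκ0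
  rw [abs_of_pos hκpos, Complex.real_smul,
    show |l * κ| = κ * |l| by rw [abs_mul, abs_of_pos hκpos]; ring,
    Complex.exp_sub]
  push_cast
  rw [Complex.exp_neg]
  have he : Complex.exp ((κ : ℂ) * |l|) ≠ 0 := Complex.exp_ne_zero _
  field_simp
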